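/- Let k be a field, H a cocommutative Hopf algebra over k, and R a universal R-matrix on H. Then the map α(l) = (id⊗l)(R) is H-equivariant for the adjoint actions: α(l^h) = (α(l))^h for all h ∈ H and l ∈ H*. In particular H_l is a normal subspace of H: for all h ∈ H and x ∈ H_l, the element x^h = Σ_(h) h₍₁₎·x·S(h₍₂₎) lies in H_l, and the same holds for H_r and β(l) = (l⊗id)(R). -/

import Mathlib

open scoped TensorProduct

noncomputable section

variable (k H : Type*) [Field k] [Ring H] [HopfAlgebra k H]

/-- The comultiplication as an algebra map. -/
abbrev Δ : H →ₐ[k] H ⊗[k] H := Bialgebra.comulAlgHom k H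

/-- The flip `x ⊗ y ↦ y ⊗ x` of the tensor square, as an algebra map. -/
abbrev τ : H ⊗[k] H →ₐ[k] H ⊗[k] H := (Algebra.TensorProduct.comm k H H).toAlgHom

/-- `x ⊗ y ↦ x ⊗ y ⊗ 1`. -/
abbrev ι₁₂ : H ⊗[k] H →ₐ[k] H ⊗[k] (H ⊗[k] H) :=
  Algebra.TensorProduct.map (AlgHom.id k H) Algebra.TensorProduct.includeLeft

/-- `x ⊗ y ↦ x ⊗ 1 ⊗ y`. -/
abbrev ι₁₃ : H ⊗[k] H →ₐ[k] H ⊗[k] (H ⊗[k] H) :=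
  Algebra.TensorProduct.map (AlgHom.id k H) Algebra.TensorProduct.includeRight

/-- `x ⊗ y ↦ 1 ⊗ x ⊗ y`. -/
abbrev ι₂₃ : H ⊗[k] H →ₐ[k] H ⊗[k] (H ⊗[k] H) :=
  Algebra.TensorProduct.includeRight

/-- `id ⊗ Δ`. -/
abbrev idΔ : H ⊗[k] H →ₐ[k] H ⊗[k] (H ⊗[k] H) :=
  Algebra.TensorProduct.map (AlgHom.id k H) (Bialgebra.comulAlgHom k H)

/-- `Δ ⊗ id` (re-associated to land in `H ⊗ (H ⊗ H)`). -/
abbrev Δid : H ⊗[k] H →ₐ[k] H ⊗[k] (H ⊗[k] H) :=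
  (Algebra.TensorProduct.assoc k k k H H H).toAlgHom.comp
    (Algebra.TensorProduct.map (Bialgebra.comulAlgHom k H) (AlgHom.id k H))

/-- `R` is a universal R-matrix (quasitriangular structure) on `H`. -/
def IsUnivRMatrix (R : H ⊗[k] H) : Prop :=
  IsUnit R ∧
  (∀ h : H, R * τ k H (Δ k H h) = Δ k H h * R) ∧
  idΔ k H R = ι₁₃ k H R * ι₁₂ k H R ∧
  Δid k H R = ι₁₃ k H R * ι₂₃ k H R

/-- `ε ⊗ id : H ⊗ H → H`, `x ⊗ y ↦ ε(x)·y`. -/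
abbrev εid : H ⊗[k] H →ₐ[k] H :=
  (Algebra.TensorProduct.lid k H).toAlgHom.comp
    (Algebra.TensorProduct.map (Bialgebra.counitAlgHom k H) (AlgHom.id k H))

/-- `id ⊗ ε : H ⊗ H → H`, `x ⊗ y ↦ ε(y)·x`. -/
abbrev idε : H ⊗[k] H →ₐ[k] H :=
  ((Algebra.TensorProduct.rid k k H).toAlgHom.restrictScalars k).comp
    (Algebra.TensorProduct.map (AlgHom.id k H) (Bialgebra.counitAlgHom k H))

/-- `S ⊗ id : H ⊗ H → H ⊗ H`. -/
abbrev Sid : H ⊗[k] H →ₗ[k] H ⊗[k] H :=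
  LinearMap.rTensor H (HopfAlgebra.antipode (R := k))

/-- `S ⊗ S : H ⊗ H → H ⊗ H`. -/
abbrev SS : H ⊗[k] H →ₗ[k] H ⊗[k] H :=
  TensorProduct.map (HopfAlgebra.antipode (R := k)) (HopfAlgebra.antipode (R := k))

/-- The Markov element `u = μ((S ⊗ id)(τ(R)))` of a bivector `R`. -/
def markov (R : H ⊗[k] H) : H :=
  LinearMap.mul' k H (Sid k H ((TensorProduct.comm k H H) R))

/-- `(id ⊗ l)(R)` : applying a linear functional to the second tensor factor. -/
def evR (l : H →ₗ[k] k) : H ⊗[k] H →ₗ[k] H :=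
  (TensorProduct.rid k H).toLinearMap ∘ₗ LinearMap.lTensor H l

/-- `(l ⊗ id)(R)` : applying a linear functional to the first tensor factor. -/
def evL (l : H →ₗ[k] k) : H ⊗[k] H →ₗ[k] H :=
  (TensorProduct.lid k H).toLinearMap ∘ₗ LinearMap.rTensor H l

/-- The subspace `H_l = {(id ⊗ l)(R) : l ∈ H*}`. -/
def Hl (R : H ⊗[k] H) : Set H := Set.range fun l : H →ₗ[k] k => evR k H l R

/-- The subspace `H_r = {(l ⊗ id)(R) : l ∈ H*}`. -/
def Hr (R : H ⊗[k] H) : Set H := Set.range fun l : H →ₗ[k] k => evL k H l R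

/-- `H` is cocommutative: `τ ∘ Δ = Δ`. -/
def IsCocomm : Prop :=
  ∀ x : H, (TensorProduct.comm k H H) (Coalgebra.comul (R := k) x) = Coalgebra.comul x

/-- The adjoint action `x ↦ x^h = Σ h₍₁₎ · x · S(h₍₂₎)` of `h`, as an endomorphism of `H`. -/
def adEnd (h : H) : H →ₗ[k] H :=
  TensorProduct.lift
    (LinearMap.mk₂ k
      (fun a b => LinearMap.mulRight k (HopfAlgebra.antipode (R := k) b) ∘ₗ
        LinearMap.mulLeft k a)
      (fun a a' b => by ext x; simp [add_mul])
      (fun c a b => by ext x; simp [smul_mul_assoc])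
      (fun a b b' => by ext x; simp [mul_add])
      (fun c a b => by ext x; simp [mul_smul_comm]))
    (Coalgebra.comul h)



set_option linter.unusedRCasesPattern false
set_option linter.unusedSectionVars false
set_option maxHeartbeats 1000000

namespace Conv
variable {K : Type*} [CommSemiring K]
variable {C : Type*} [AddCommMonoid C] [Module K C] [Coalgebra K C]
variable {A : Type*} [Semiring A] [Algebra K A]
variable {B : Type*} [Semiring B] [Algebra K B]

open TensorProduct LinearMap Coalgebra

def conv (f g : C →ₗ[K] A) : C →ₗ[K] A :=
  LinearMap.mul' K A ∘ₗ TensorProduct.map f g ∘ₗ Coalgebra.comul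

def convOne : C →ₗ[K] A := Algebra.linearMap K A ∘ₗ Coalgebra.counit

lemma conv_apply (f g : C →ₗ[K] A) (x : C) :
    conv f g x = LinearMap.mul' K A (TensorProduct.map f g (Coalgebra.comul x)) := rfl

lemma mul'_comp_rTensor_linearMap :
    (LinearMap.mul' K A) ∘ₗ LinearMap.rTensor A (Algebra.linearMap K A)
    = (TensorProduct.lid K A).toLinearMap := by
  ext c a; simp [Algebra.smul_def]

lemma mul'_comp_lTensor_linearMap :
    (LinearMap.mul' K A) ∘ₗ LinearMap.lTensor A (Algebra.linearMap K A)
    = (TensorProduct.rid K A).toLinearMap := by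
  ext a c; simp [Algebra.smul_def, Algebra.commutes]

lemma lid_map_counit {M : Type*} [AddCommMonoid M] [Module K M] (f : C →ₗ[K] M) :
    (TensorProduct.lid K M).toLinearMap ∘ₗ TensorProduct.map Coalgebra.counit f ∘ₗ
      Coalgebra.comul = f := by
  rw [← LinearMap.lTensor_comp_rTensor]
  ext x
  simp only [LinearMap.comp_apply, LinearEquiv.coe_coe]
  rw [Coalgebra.rTensor_counit_comul]; simp

lemma rid_map_counit {M : Type*} [AddCommMonoid M] [Module K M] (f : C →ₗ[K] M) :
    (TensorProduct.rid K M).toLinearMap ∘ₗ TensorProduct.map f Coalgebra.counit ∘ₗ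
      Coalgebra.comul = f := by
  rw [← LinearMap.rTensor_comp_lTensor]
  ext x
  simp only [LinearMap.comp_apply, LinearEquiv.coe_coe]
  rw [Coalgebra.lTensor_counit_comul]; simp

lemma conv_convOne (f : C →ₗ[K] A) : conv f convOne = f := by
  unfold conv convOne
  have : TensorProduct.map f ((Algebra.linearMap K A) ∘ₗ counit)
      = LinearMap.lTensor A (Algebra.linearMap K A) ∘ₗ
        TensorProduct.map f (counit : C →ₗ[K] K) := by
    ext x y; simp
  rw [this, ← LinearMap.comp_assoc _ _ (LinearMap.mul' K A),
    ← LinearMap.comp_assoc, mul'_comp_lTensor_linearMap, LinearMap.comp_assoc,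
    rid_map_counit]

lemma convOne_conv (f : C →ₗ[K] A) : conv convOne f = f := by
  unfold conv convOne
  have : TensorProduct.map ((Algebra.linearMap K A) ∘ₗ counit) f
      = LinearMap.rTensor A (Algebra.linearMap K A) ∘ₗ
        TensorProduct.map (counit : C →ₗ[K] K) f := by
    ext x y; simp
  rw [this, ← LinearMap.comp_assoc _ _ (LinearMap.mul' K A),
    ← LinearMap.comp_assoc, mul'_comp_rTensor_linearMap, LinearMap.comp_assoc,
    lid_map_counit]

lemma mul'_assoc_aux (f g h : C →ₗ[K] A) :
    LinearMap.mul' K A ∘ₗ TensorProduct.map f (LinearMap.mul' K A ∘ₗ TensorProduct.map g h) ∘ₗ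
      (TensorProduct.assoc K C C C).toLinearMap
    = LinearMap.mul' K A ∘ₗ TensorProduct.map (LinearMap.mul' K A ∘ₗ TensorProduct.map f g) h := by
  ext x y z
  simp [mul_assoc]

lemma conv_assoc (f g h : C →ₗ[K] A) : conv (conv f g) h = conv f (conv g h) := by
  unfold conv
  have h1 : TensorProduct.map (LinearMap.mul' K A ∘ₗ TensorProduct.map f g ∘ₗ comul) h
      = TensorProduct.map (LinearMap.mul' K A ∘ₗ TensorProduct.map f g) h ∘ₗ
        LinearMap.rTensor C (comul : C →ₗ[K] C ⊗[K] C) := by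
    ext x y; simp
  have h2 : TensorProduct.map f (LinearMap.mul' K A ∘ₗ TensorProduct.map g h ∘ₗ comul)
      = TensorProduct.map f (LinearMap.mul' K A ∘ₗ TensorProduct.map g h) ∘ₗ
        LinearMap.lTensor C (comul : C →ₗ[K] C ⊗[K] C) := by
    ext x y; simp
  rw [h1, h2]
  simp only [← LinearMap.comp_assoc]
  rw [← mul'_assoc_aux f g h]
  simp only [LinearMap.comp_assoc]
  rw [Coalgebra.coassoc]

lemma conv_unique {f g g' : C →ₗ[K] A} (h1 : conv g f = convOne) (h2 : conv f g' = convOne) :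
    g = g' := by
  have : conv g (conv f g') = conv (conv g f) g' := (conv_assoc g f g').symm
  rw [h2, h1, conv_convOne, convOne_conv] at this
  exact this

lemma comp_conv (ψ : A →ₐ[K] B) (f g : C →ₗ[K] A) :
    ψ.toLinearMap ∘ₗ conv f g = conv (ψ.toLinearMap ∘ₗ f) (ψ.toLinearMap ∘ₗ g) := by
  unfold conv
  simp only [← LinearMap.comp_assoc]
  congr 1
  ext x y; simp

lemma comp_convOne (ψ : A →ₐ[K] B) :
    ψ.toLinearMap ∘ₗ (convOne : C →ₗ[K] A) = convOne := by
  unfold convOne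
  simp only [← LinearMap.comp_assoc]
  congr 1
  ext c; simp

lemma conv_mulLeft (M : A) (f g : C →ₗ[K] A) :
    conv (LinearMap.mulLeft K M ∘ₗ f) g = LinearMap.mulLeft K M ∘ₗ conv f g := by
  unfold conv
  simp only [← LinearMap.comp_assoc]
  congr 1
  ext x y; simp [mul_assoc]

lemma conv_mulRight (M : A) (f g : C →ₗ[K] A) :
    conv f (LinearMap.mulRight K M ∘ₗ g) = LinearMap.mulRight K M ∘ₗ conv f g := by
  unfold conv
  simp only [← LinearMap.comp_assoc]
  congr 1
  ext x y; simp [mul_assoc]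

def constMap (M : A) : C →ₗ[K] A := LinearMap.toSpanSingleton K A M ∘ₗ Coalgebra.counit

lemma constMap_eq_mulLeft (M : A) :
    (constMap M : C →ₗ[K] A) = LinearMap.mulLeft K M ∘ₗ convOne := by
  refine LinearMap.ext fun x => ?_
  simp [constMap, convOne, Algebra.smul_def, Algebra.commutes]

lemma constMap_eq_mulRight (M : A) :
    (constMap M : C →ₗ[K] A) = LinearMap.mulRight K M ∘ₗ convOne := by
  refine LinearMap.ext fun x => ?_
  simp [constMap, convOne, Algebra.smul_def]

lemma constMap_conv (M : A) (f : C →ₗ[K] A) :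
    conv (constMap M) f = LinearMap.mulLeft K M ∘ₗ f := by
  rw [constMap_eq_mulLeft, conv_mulLeft, convOne_conv]

lemma conv_constMap (M : A) (f : C →ₗ[K] A) :
    conv f (constMap M) = LinearMap.mulRight K M ∘ₗ f := by
  rw [constMap_eq_mulRight, conv_mulRight, conv_convOne]

lemma conv_counit (f : C →ₗ[K] K) : conv Coalgebra.counit f = f := by
  unfold conv
  have : LinearMap.mul' K K = (TensorProduct.lid K K).toLinearMap := by
    ext x y; simp
  rw [this, lid_map_counit]

lemma convOne_eq_counit : (convOne : C →ₗ[K] K) = Coalgebra.counit := by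
  refine LinearMap.ext fun x => ?_
  simp [convOne]

lemma conv_sandwich {a b c ai bi : C →ₗ[K] A} (hai : conv ai a = convOne)
    (hbi : conv b bi = convOne) (hcomm : conv c (conv a b) = conv (conv a b) c) :
    conv (conv ai c) a = conv (conv b c) bi := by
  calc conv (conv ai c) a
      = conv (conv ai c) (conv a (conv b bi)) := by rw [hbi, conv_convOne]
    _ = conv ai (conv (conv c (conv a b)) bi) := by simp only [conv_assoc]
    _ = conv ai (conv (conv (conv a b) c) bi) := by rw [hcomm]
    _ = conv (conv ai a) (conv (conv b c) bi) := by simp only [conv_assoc]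
    _ = conv (conv b c) bi := by rw [hai, convOne_conv]

end Conv

namespace HopfFacts
open TensorProduct LinearMap Coalgebra Conv
variable {K : Type*} [CommSemiring K]
variable {Hb : Type*} [Semiring Hb] [HopfAlgebra K Hb]
variable {A : Type*} [Semiring A] [Algebra K A]

local notation "S" => (HopfAlgebra.antipode (R := K) (A := Hb))

lemma conv_antipode_id : conv (S) (LinearMap.id : Hb →ₗ[K] Hb) = Conv.convOne :=
  HopfAlgebra.mul_antipode_rTensor_comul

lemma conv_id_antipode : conv (LinearMap.id : Hb →ₗ[K] Hb) (S) = Conv.convOne :=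
  HopfAlgebra.mul_antipode_lTensor_comul

lemma conv_algHomS (φ : Hb →ₐ[K] A) :
    conv (φ.toLinearMap ∘ₗ S) φ.toLinearMap = Conv.convOne := by
  have h := comp_conv φ (S) (LinearMap.id : Hb →ₗ[K] Hb)
  rw [conv_antipode_id, comp_convOne] at h
  simpa [LinearMap.comp_id] using h.symm

lemma conv_algHomS' (φ : Hb →ₐ[K] A) :
    conv φ.toLinearMap (φ.toLinearMap ∘ₗ S) = Conv.convOne := by
  have h := comp_conv φ (LinearMap.id : Hb →ₗ[K] Hb) (S)
  rw [conv_id_antipode, comp_convOne] at h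
  simpa [LinearMap.comp_id] using h.symm

lemma counit_comp_antipode :
    (Coalgebra.counit : Hb →ₗ[K] K) ∘ₗ S = Coalgebra.counit := by
  have h := comp_conv (Bialgebra.counitAlgHom K Hb) (LinearMap.id : Hb →ₗ[K] Hb) (S)
  rw [conv_id_antipode, comp_convOne] at h
  have h2 : (Bialgebra.counitAlgHom K Hb).toLinearMap = (Coalgebra.counit : Hb →ₗ[K] K) := rfl
  rw [h2, LinearMap.comp_id, conv_counit] at h
  rw [← h, convOne_eq_counit]

section Cocomm
variable (hC : ∀ x : Hb, (TensorProduct.comm K Hb Hb) (Coalgebra.comul (R := K) x) = Coalgebra.comul x)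

local notation "iL" => (Algebra.TensorProduct.includeLeft : Hb →ₐ[K] Hb ⊗[K] Hb)
local notation "iR" => (Algebra.TensorProduct.includeRight : Hb →ₐ[K] Hb ⊗[K] Hb)

lemma mul'_map_iL_iR :
    LinearMap.mul' K (Hb ⊗[K] Hb) ∘ₗ
      TensorProduct.map (iL).toLinearMap (iR).toLinearMap = LinearMap.id := by
  ext x y
  simp [Algebra.TensorProduct.tmul_mul_tmul]

lemma conv_iL_iR : conv (iL).toLinearMap (iR).toLinearMap
    = (Coalgebra.comul : Hb →ₗ[K] Hb ⊗[K] Hb) := by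
  unfold conv
  simp only [← LinearMap.comp_assoc]
  rw [mul'_map_iL_iR, LinearMap.id_comp]

lemma mul'_map_iR_iL :
    LinearMap.mul' K (Hb ⊗[K] Hb) ∘ₗ TensorProduct.map (iR).toLinearMap (iL).toLinearMap
    = (TensorProduct.comm K Hb Hb).toLinearMap := by
  ext x y
  simp [Algebra.TensorProduct.tmul_mul_tmul]

include hC in
lemma conv_iR_iL : conv (iR).toLinearMap (iL).toLinearMap
    = (Coalgebra.comul : Hb →ₗ[K] Hb ⊗[K] Hb) := by
  unfold conv
  simp only [← LinearMap.comp_assoc]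
  rw [mul'_map_iR_iL]
  exact LinearMap.ext fun h => hC h

include hC in
lemma conv_iRS_iLS : conv ((iR).toLinearMap ∘ₗ S) ((iL).toLinearMap ∘ₗ S)
    = TensorProduct.map (S) (S) ∘ₗ Coalgebra.comul := by
  unfold conv
  simp only [← LinearMap.comp_assoc]
  rw [show LinearMap.mul' K (Hb ⊗[K] Hb) ∘ₗ
      TensorProduct.map ((iR).toLinearMap ∘ₗ S) ((iL).toLinearMap ∘ₗ S)
      = (TensorProduct.map (S) (S)) ∘ₗ (TensorProduct.comm K Hb Hb).toLinearMap from by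
    ext x y; simp [Algebra.TensorProduct.tmul_mul_tmul]]
  rw [LinearMap.comp_assoc]
  congr 1
  exact LinearMap.ext fun h => hC h

include hC in
lemma comul_comp_antipode :
    (Coalgebra.comul : Hb →ₗ[K] Hb ⊗[K] Hb) ∘ₗ S
    = TensorProduct.map (S) (S) ∘ₗ Coalgebra.comul := by
  refine conv_unique (f := (Coalgebra.comul : Hb →ₗ[K] Hb ⊗[K] Hb)) ?_ ?_
  · have h := comp_conv (Bialgebra.comulAlgHom K Hb) (S) (LinearMap.id : Hb →ₗ[K] Hb)
    rw [conv_antipode_id, comp_convOne] at h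
    have h2 : (Bialgebra.comulAlgHom K Hb).toLinearMap
        = (Coalgebra.comul : Hb →ₗ[K] Hb ⊗[K] Hb) := rfl
    rw [h2, LinearMap.comp_id] at h
    exact h.symm
  · rw [← conv_iRS_iLS hC, ← conv_iL_iR, conv_assoc, ← conv_assoc (iR).toLinearMap,
      conv_algHomS' (iR), convOne_conv, conv_algHomS' (iL)]

include hC in
lemma antipode_comp_antipode : (S) ∘ₗ (S) = (LinearMap.id : Hb →ₗ[K] Hb) := by
  refine (conv_unique (f := (S)) conv_id_antipode ?_).symm
  unfold conv
  rw [show TensorProduct.map (S) ((S) ∘ₗ S)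
      = LinearMap.lTensor Hb (S) ∘ₗ TensorProduct.map (S) (S) from by ext x y; simp]
  rw [LinearMap.comp_assoc, ← comul_comp_antipode hC]
  rw [show LinearMap.lTensor Hb (S) ∘ₗ ((Coalgebra.comul : Hb →ₗ[K] Hb ⊗[K] Hb) ∘ₗ S)
      = (LinearMap.lTensor Hb (S) ∘ₗ (Coalgebra.comul : Hb →ₗ[K] Hb ⊗[K] Hb)) ∘ₗ S from rfl]
  rw [← LinearMap.comp_assoc]
  rw [HopfAlgebra.mul_antipode_lTensor_comul]
  unfold Conv.convOne
  rw [LinearMap.comp_assoc, counit_comp_antipode]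

include hC in
lemma conv_comp_antipode (f g : Hb →ₗ[K] A) :
    conv f g ∘ₗ S = conv (f ∘ₗ S) (g ∘ₗ S) := by
  unfold conv
  simp only [LinearMap.comp_assoc]
  rw [comul_comp_antipode hC,
    show TensorProduct.map f g ∘ₗ (TensorProduct.map (S) (S) ∘ₗ
        (Coalgebra.comul : Hb →ₗ[K] Hb ⊗[K] Hb))
      = TensorProduct.map (f ∘ₗ S) (g ∘ₗ S) ∘ₗ (Coalgebra.comul : Hb →ₗ[K] Hb ⊗[K] Hb) from by
      rw [← LinearMap.comp_assoc, ← TensorProduct.map_comp]]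

end Cocomm
end HopfFacts


section AdEndLemmas
open TensorProduct LinearMap Coalgebra

variable {K A : Type*} [Field K] [Ring A] [HopfAlgebra K A]

local notation "S" => (HopfAlgebra.antipode (R := K) (A := A))
local notation "iL" => (Algebra.TensorProduct.includeLeft : A →ₐ[K] A ⊗[K] A)
local notation "iR" => (Algebra.TensorProduct.includeRight : A →ₐ[K] A ⊗[K] A)

lemma rTensor_mulLR (T : A ⊗[K] A) (x y : A) :
    LinearMap.rTensor A (LinearMap.mulRight K y ∘ₗ LinearMap.mulLeft K x) T
    = (x ⊗ₜ[K] (1 : A)) * T * (y ⊗ₜ[K] (1 : A)) := by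
  induction T using TensorProduct.induction_on with
  | zero => simp
  | tmul a b => simp [Algebra.TensorProduct.tmul_mul_tmul, mul_assoc]
  | add u v hu hv => simp [hu, hv, mul_add, add_mul]

lemma lTensor_mulLR (T : A ⊗[K] A) (x y : A) :
    LinearMap.lTensor A (LinearMap.mulRight K y ∘ₗ LinearMap.mulLeft K x) T
    = ((1 : A) ⊗ₜ[K] x) * T * ((1 : A) ⊗ₜ[K] y) := by
  induction T using TensorProduct.induction_on with
  | zero => simp
  | tmul a b => simp [Algebra.TensorProduct.tmul_mul_tmul, mul_assoc]
  | add u v hu hv => simp [hu, hv, mul_add, add_mul]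

lemma rTensor_adEnd (R : A ⊗[K] A) (h : A) :
    LinearMap.rTensor A (adEnd K A h) R
    = Conv.conv (Conv.conv (iL).toLinearMap (Conv.constMap R))
        ((iL).toLinearMap ∘ₗ S) h := by
  rw [Conv.conv_constMap, Conv.conv_apply]
  unfold adEnd
  generalize (Coalgebra.comul (R := K) h : A ⊗[K] A) = t
  induction t using TensorProduct.induction_on with
  | zero => simp
  | tmul x y =>
    simp only [TensorProduct.lift.tmul, LinearMap.mk₂_apply, TensorProduct.map_tmul,
      LinearMap.comp_apply, LinearMap.mul'_apply, LinearMap.mulRight_apply,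
      Algebra.TensorProduct.includeLeft_apply]
    rw [rTensor_mulLR]
    simp
  | add u v hu hv => simp [map_add, LinearMap.rTensor_add, hu, hv]

lemma lTensor_adEnd (R : A ⊗[K] A) (h : A) :
    LinearMap.lTensor A (adEnd K A h) R
    = Conv.conv (Conv.conv (iR).toLinearMap (Conv.constMap R))
        ((iR).toLinearMap ∘ₗ S) h := by
  rw [Conv.conv_constMap, Conv.conv_apply]
  unfold adEnd
  generalize (Coalgebra.comul (R := K) h : A ⊗[K] A) = t
  induction t using TensorProduct.induction_on with
  | zero => simp
  | tmul x y =>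
    simp only [TensorProduct.lift.tmul, LinearMap.mk₂_apply, TensorProduct.map_tmul,
      LinearMap.comp_apply, LinearMap.mul'_apply, LinearMap.mulRight_apply,
      Algebra.TensorProduct.includeRight_apply]
    rw [lTensor_mulLR]
    simp
  | add u v hu hv => simp [map_add, LinearMap.lTensor_add, hu, hv]

lemma evR_comp (l : A →ₗ[K] K) (φ : A →ₗ[K] A) (t : A ⊗[K] A) :
    evR K A (l ∘ₗ φ) t = evR K A l (LinearMap.lTensor A φ t) := by
  simp [evR, LinearMap.lTensor_comp]

lemma evL_comp (l : A →ₗ[K] K) (φ : A →ₗ[K] A) (t : A ⊗[K] A) :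
    evL K A (l ∘ₗ φ) t = evL K A l (LinearMap.rTensor A φ t) := by
  simp [evL, LinearMap.rTensor_comp]

lemma apply_evR (l : A →ₗ[K] K) (φ : A →ₗ[K] A) (t : A ⊗[K] A) :
    φ (evR K A l t) = evR K A l (LinearMap.rTensor A φ t) := by
  induction t using TensorProduct.induction_on with
  | zero => simp [evR]
  | tmul a b => simp [evR]
  | add u v hu hv => simp [evR, map_add] at hu hv ⊢; rw [hu, hv]

lemma apply_evL (l : A →ₗ[K] K) (φ : A →ₗ[K] A) (t : A ⊗[K] A) :
    φ (evL K A l t) = evL K A l (LinearMap.lTensor A φ t) := by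
  induction t using TensorProduct.induction_on with
  | zero => simp [evL]
  | tmul a b => simp [evL]
  | add u v hu hv => simp [evL, map_add] at hu hv ⊢; rw [hu, hv]

end AdEndLemmas


/-- For a universal R-matrix `R` on a cocommutative Hopf algebra `H`, the maps
`α(l) = (id ⊗ l)(R)` and `β(l) = (l ⊗ id)(R)` are equivariant for the adjoint actions
(`α(l^h) = α(l)^h`); in particular `H_l` and `H_r` are normal (adjoint-invariant)
subspaces of `H`. -/
theorem evR_evL_adjoint_equivariant {k H : Type*} [Field k] [Ring H] [HopfAlgebra k H]
    (R : H ⊗[k] H) (hR : IsUnivRMatrix k H R) (hC : IsCocomm k H) :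
    (∀ (h : H) (l : H →ₗ[k] k),
      evR k H (l ∘ₗ adEnd k H (HopfAlgebra.antipode (R := k) h)) R =
        adEnd k H h (evR k H l R)) ∧
    (∀ (h : H) (l : H →ₗ[k] k),
      evL k H (l ∘ₗ adEnd k H (HopfAlgebra.antipode (R := k) h)) R =
        adEnd k H h (evL k H l R)) ∧
    (∀ h : H, ∀ x ∈ Hl k H R, adEnd k H h x ∈ Hl k H R) ∧
    (∀ h : H, ∀ x ∈ Hr k H R, adEnd k H h x ∈ Hr k H R) := by
  classical
  obtain ⟨-, hcom, -, -⟩ := hR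
  have hC' : ∀ x : H, (TensorProduct.comm k H H) (Coalgebra.comul (R := k) x)
      = Coalgebra.comul x := hC
  have hRδ : ∀ x : H, R * (Coalgebra.comul (R := k) x) = (Coalgebra.comul (R := k) x) * R := by
    intro x
    have h1 := hcom x
    have h2 : (τ k H) (Δ k H x) = Coalgebra.comul (R := k) x := by
      have e : (τ k H) (Δ k H x) = (TensorProduct.comm k H H) (Coalgebra.comul (R := k) x) := rfl
      rw [e, hC']
    have h3 : (Δ k H x) = Coalgebra.comul (R := k) x := rfl
    rw [h2, h3] at h1
    exact h1
  have SS : (HopfAlgebra.antipode (R := k) (A := H)) ∘ₗ HopfAlgebra.antipode (R := k)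
      = LinearMap.id := HopfFacts.antipode_comp_antipode hC'
  have cRS : (Conv.constMap R : H →ₗ[k] H ⊗[k] H) ∘ₗ HopfAlgebra.antipode (R := k)
      = Conv.constMap R := by
    unfold Conv.constMap
    rw [LinearMap.comp_assoc, HopfFacts.counit_comp_antipode]
  have hcomm1 : Conv.conv (Conv.constMap R)
        (Conv.conv (Algebra.TensorProduct.includeRight : H →ₐ[k] H ⊗[k] H).toLinearMap
          (Algebra.TensorProduct.includeLeft : H →ₐ[k] H ⊗[k] H).toLinearMap)
      = Conv.conv (Conv.conv (Algebra.TensorProduct.includeRight : H →ₐ[k] H ⊗[k] H).toLinearMap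
          (Algebra.TensorProduct.includeLeft : H →ₐ[k] H ⊗[k] H).toLinearMap)
          (Conv.constMap R) := by
    rw [HopfFacts.conv_iR_iL hC', Conv.constMap_conv, Conv.conv_constMap]
    exact LinearMap.ext fun x => hRδ x
  have hcomm2 : Conv.conv (Conv.constMap R)
        (Conv.conv (Algebra.TensorProduct.includeLeft : H →ₐ[k] H ⊗[k] H).toLinearMap
          (Algebra.TensorProduct.includeRight : H →ₐ[k] H ⊗[k] H).toLinearMap)
      = Conv.conv (Conv.conv (Algebra.TensorProduct.includeLeft : H →ₐ[k] H ⊗[k] H).toLinearMap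
          (Algebra.TensorProduct.includeRight : H →ₐ[k] H ⊗[k] H).toLinearMap)
          (Conv.constMap R) := by
    rw [HopfFacts.conv_iL_iR, Conv.constMap_conv, Conv.conv_constMap]
    exact LinearMap.ext fun x => hRδ x
  have sand1 := Conv.conv_sandwich
    (HopfFacts.conv_algHomS (Algebra.TensorProduct.includeRight : H →ₐ[k] H ⊗[k] H))
    (HopfFacts.conv_algHomS' (Algebra.TensorProduct.includeLeft : H →ₐ[k] H ⊗[k] H)) hcomm1
  have sand2 := Conv.conv_sandwich
    (HopfFacts.conv_algHomS (Algebra.TensorProduct.includeLeft : H →ₐ[k] H ⊗[k] H))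
    (HopfFacts.conv_algHomS' (Algebra.TensorProduct.includeRight : H →ₐ[k] H ⊗[k] H)) hcomm2
  have key1 : ∀ h : H,
      LinearMap.lTensor H (adEnd k H (HopfAlgebra.antipode (R := k) h)) R
      = LinearMap.rTensor H (adEnd k H h) R := by
    intro h
    rw [lTensor_adEnd, rTensor_adEnd]
    have e1 : Conv.conv (Conv.conv
          (Algebra.TensorProduct.includeRight : H →ₐ[k] H ⊗[k] H).toLinearMap
          (Conv.constMap R))
          ((Algebra.TensorProduct.includeRight : H →ₐ[k] H ⊗[k] H).toLinearMap ∘ₗ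
            HopfAlgebra.antipode (R := k))
          (HopfAlgebra.antipode (R := k) h)
        = (Conv.conv (Conv.conv
          (Algebra.TensorProduct.includeRight : H →ₐ[k] H ⊗[k] H).toLinearMap
          (Conv.constMap R))
          ((Algebra.TensorProduct.includeRight : H →ₐ[k] H ⊗[k] H).toLinearMap ∘ₗ
            HopfAlgebra.antipode (R := k)) ∘ₗ HopfAlgebra.antipode (R := k)) h := rfl
    rw [e1, HopfFacts.conv_comp_antipode hC', HopfFacts.conv_comp_antipode hC', cRS,
      LinearMap.comp_assoc, SS, LinearMap.comp_id, sand1]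
  have key2 : ∀ h : H,
      LinearMap.rTensor H (adEnd k H (HopfAlgebra.antipode (R := k) h)) R
      = LinearMap.lTensor H (adEnd k H h) R := by
    intro h
    rw [rTensor_adEnd, lTensor_adEnd]
    have e1 : Conv.conv (Conv.conv
          (Algebra.TensorProduct.includeLeft : H →ₐ[k] H ⊗[k] H).toLinearMap
          (Conv.constMap R))
          ((Algebra.TensorProduct.includeLeft : H →ₐ[k] H ⊗[k] H).toLinearMap ∘ₗ
            HopfAlgebra.antipode (R := k))
          (HopfAlgebra.antipode (R := k) h)
        = (Conv.conv (Conv.conv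
          (Algebra.TensorProduct.includeLeft : H →ₐ[k] H ⊗[k] H).toLinearMap
          (Conv.constMap R))
          ((Algebra.TensorProduct.includeLeft : H →ₐ[k] H ⊗[k] H).toLinearMap ∘ₗ
            HopfAlgebra.antipode (R := k)) ∘ₗ HopfAlgebra.antipode (R := k)) h := rfl
    rw [e1, HopfFacts.conv_comp_antipode hC', HopfFacts.conv_comp_antipode hC', cRS,
      LinearMap.comp_assoc, SS, LinearMap.comp_id, sand2]
  have part1 : ∀ (h : H) (l : H →ₗ[k] k),
      evR k H (l ∘ₗ adEnd k H (HopfAlgebra.antipode (R := k) h)) R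
      = adEnd k H h (evR k H l R) := by
    intro h l
    rw [evR_comp, key1 h, ← apply_evR]
  have part2 : ∀ (h : H) (l : H →ₗ[k] k),
      evL k H (l ∘ₗ adEnd k H (HopfAlgebra.antipode (R := k) h)) R
      = adEnd k H h (evL k H l R) := by
    intro h l
    rw [evL_comp, key2 h, ← apply_evL]
  refine ⟨part1, part2, ?_, ?_⟩
  · rintro h x ⟨l, rfl⟩
    exact ⟨l ∘ₗ adEnd k H (HopfAlgebra.antipode (R := k) h), part1 h l⟩
  · rintro h x ⟨l, rfl⟩
    exact ⟨l ∘ₗ adEnd k H (HopfAlgebra.antipode (R := k) h), part2 h l⟩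


end
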